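/- Let k > 0 and v > 0, and let 0 ≤ p1 < p2 be prices such that 1 < v - p_i - k < u(k) - k for i = 1, 2. For i = 1, 2 let (x_i, y_i) be the pair of positive reals solving v - p_i - k = x_i/(1 - exp(-x_i)) and v - p_i = y_i·exp(x_i)/(1 - exp(-y_i)). Then p1·(1 - exp(-(x1 + y1))) < p2·(1 - exp(-(x2 + y2))). That is, the firm's expected profit π(p) = p·(1 - exp(-(λ0 + λ1))) strictly increases in p throughout Region 3. -/

import Mathlib

open Real Set

noncomputable def ff (t : ℝ) : ℝ := t / (1 - Real.exp (-t))

lemma one_sub_exp_neg_pos {t : ℝ} (ht : 0 < t) : 0 < 1 - Real.exp (-t) := by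
  have : Real.exp (-t) < 1 := Real.exp_lt_one_iff.mpr (by linarith)
  linarith

lemma hasDerivAt_exp_neg (t : ℝ) :
    HasDerivAt (fun u : ℝ => Real.exp (-u)) (-Real.exp (-t)) t := by
  simpa [Function.comp_def] using (Real.hasDerivAt_exp (-t)).comp t (hasDerivAt_neg t)

lemma hasDerivAt_ff {t : ℝ} (ht : 0 < t) :
    HasDerivAt ff ((1 - Real.exp (-t) - t * Real.exp (-t)) / (1 - Real.exp (-t)) ^ 2) t := by
  have h1 : HasDerivAt (fun u : ℝ => 1 - Real.exp (-u)) (Real.exp (-t)) t := by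
    simpa using (hasDerivAt_exp_neg t).const_sub 1
  have h := (hasDerivAt_id t).div h1 (ne_of_gt (one_sub_exp_neg_pos ht))
  simp only [id_eq, one_mul] at h
  exact h

lemma ff_strictMonoOn : StrictMonoOn ff (Ioi 0) := by
  apply strictMonoOn_of_deriv_pos (convex_Ioi 0)
  · exact fun t ht => ((hasDerivAt_ff ht).continuousAt).continuousWithinAt
  · intro t ht
    rw [interior_Ioi] at ht
    rw [(hasDerivAt_ff ht).deriv]
    have h1 : t + 1 < Real.exp t := Real.add_one_lt_exp (ne_of_gt ht)
    have h2 : Real.exp (-t) * Real.exp t = 1 := by rw [← Real.exp_add]; simp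
    have h3 : 0 < Real.exp t := Real.exp_pos t
    have h4 : 0 < 1 - Real.exp (-t) := one_sub_exp_neg_pos ht
    have hnum : 0 < 1 - Real.exp (-t) - t * Real.exp (-t) := by nlinarith
    positivity

/-- `2(w - 1 + e^{-w}) > (1-e^{-w})^2` for `w > 0`, i.e. `f(w) - f'(w) > 1/2`. -/
lemma ineqA {w : ℝ} (hw : 0 < w) :
    (1 - Real.exp (-w)) ^ 2 < 2 * (w - 1 + Real.exp (-w)) := by
  set φ : ℝ → ℝ := fun t => 2 * t + 4 * Real.exp (-t) - Real.exp (-t) ^ 2 with hφ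
  have hder : ∀ t : ℝ, HasDerivAt φ
      (2 + 4 * (-Real.exp (-t)) - 2 * Real.exp (-t) * (-Real.exp (-t))) t := by
    intro t
    have e1 := hasDerivAt_exp_neg t
    have h2 : HasDerivAt (fun u : ℝ => 2 * u) 2 t := by
      simpa using (hasDerivAt_id t).const_mul 2
    have hsq : HasDerivAt (fun u : ℝ => Real.exp (-u) ^ 2)
        (2 * Real.exp (-t) * (-Real.exp (-t))) t := by
      have := e1.fun_pow 2
      refine this.congr_deriv ?_
      ring
    exact (h2.add (e1.const_mul 4)).sub hsq
  have hmono : StrictMonoOn φ (Ici 0) := by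
    apply strictMonoOn_of_deriv_pos (convex_Ici 0)
    · exact fun t _ => ((hder t).continuousAt).continuousWithinAt
    · intro t ht
      rw [interior_Ici] at ht
      rw [(hder t).deriv]
      have h4 : 0 < 1 - Real.exp (-t) := one_sub_exp_neg_pos ht
      nlinarith
  have h0 : φ 0 < φ w := hmono (mem_Ici.mpr (le_refl 0)) (mem_Ici.mpr (le_of_lt hw)) hw
  have : φ 0 = 3 := by norm_num [hφ]
  have hw' := h0
  rw [this] at hw'
  simp only [hφ] at hw'
  nlinarith
/-- `4 e^s ≤ e^{2s} + 2s + 3` for `s ≥ 0`, i.e. `f'(s) ≤ e^s/2`. -/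
lemma ineqB {s : ℝ} (hs : 0 ≤ s) :
    4 * Real.exp s ≤ Real.exp s ^ 2 + 2 * s + 3 := by
  set ψ : ℝ → ℝ := fun t => Real.exp t ^ 2 + (2 * t + 3) - 4 * Real.exp t with hψ
  have hder : ∀ t : ℝ, HasDerivAt ψ
      (2 * Real.exp t * Real.exp t + 2 - 4 * Real.exp t) t := by
    intro t
    have e1 := Real.hasDerivAt_exp t
    have hsq : HasDerivAt (fun u : ℝ => Real.exp u ^ 2) (2 * Real.exp t * Real.exp t) t := by
      have := e1.fun_pow 2
      refine this.congr_deriv ?_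
      ring
    have h2 : HasDerivAt (fun u : ℝ => 2 * u + 3) 2 t := by
      simpa using ((hasDerivAt_id t).const_mul 2).add_const 3
    exact (hsq.add h2).sub (e1.const_mul 4)
  have hmono : MonotoneOn ψ (Ici 0) := by
    apply monotoneOn_of_deriv_nonneg (convex_Ici 0)
    · exact fun t _ => ((hder t).continuousAt).continuousWithinAt
    · exact fun t _ => ((hder t).differentiableAt).differentiableWithinAt
    · intro t ht
      rw [(hder t).deriv]
      nlinarith [sq_nonneg (Real.exp t - 1)]
  have h0 : ψ 0 ≤ ψ s := hmono (mem_Ici.mpr (le_refl 0)) (mem_Ici.mpr hs) hs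
  have : ψ 0 = 0 := by norm_num [hψ]
  rw [this] at h0
  simp only [hψ] at h0
  linarith

/-- The key derivative inequality: `f'(s) < e^s (f(w) - f'(w))` for `s, w > 0`. -/
lemma deriv_ineq {s w : ℝ} (hs : 0 < s) (hw : 0 < w) :
    (1 - Real.exp (-s) - s * Real.exp (-s)) / (1 - Real.exp (-s)) ^ 2
      < Real.exp s * (ff w - (1 - Real.exp (-w) - w * Real.exp (-w)) / (1 - Real.exp (-w)) ^ 2) := by
  have hzs : 0 < 1 - Real.exp (-s) := one_sub_exp_neg_pos hs
  have hzw : 0 < 1 - Real.exp (-w) := one_sub_exp_neg_pos hw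
  have hes : 0 < Real.exp s := Real.exp_pos s
  have hfw : ff w - (1 - Real.exp (-w) - w * Real.exp (-w)) / (1 - Real.exp (-w)) ^ 2
      = (w - 1 + Real.exp (-w)) / (1 - Real.exp (-w)) ^ 2 := by
    rw [ff]
    field_simp
    ring
  rw [hfw]
  have hA : 1 / 2 < (w - 1 + Real.exp (-w)) / (1 - Real.exp (-w)) ^ 2 := by
    rw [div_lt_div_iff₀ (by norm_num) (by positivity)]
    nlinarith [ineqA hw]
  have hB : (1 - Real.exp (-s) - s * Real.exp (-s)) / (1 - Real.exp (-s)) ^ 2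
      ≤ Real.exp s / 2 := by
    rw [div_le_div_iff₀ (by positivity) (by norm_num)]
    have h2 : Real.exp (-s) * Real.exp s = 1 := by rw [← Real.exp_add]; simp
    nlinarith [ineqB hs.le]
  calc (1 - Real.exp (-s) - s * Real.exp (-s)) / (1 - Real.exp (-s)) ^ 2
      ≤ Real.exp s / 2 := hB
    _ = Real.exp s * (1 / 2) := by ring
    _ < Real.exp s * ((w - 1 + Real.exp (-w)) / (1 - Real.exp (-w)) ^ 2) := by
        exact mul_lt_mul_of_pos_left hA hes

/-- Along the level curve `f(y)e^x - f(x) = k`, the sum `x + y` is decreasing in `x`. -/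
lemma key {x1 x2 y1 y2 : ℝ} (hx2 : 0 < x2) (h21 : x2 < x1) (hy1 : 0 < y1) (hy2 : 0 < y2)
    (hkk : ff y2 * Real.exp x2 - ff x2 = ff y1 * Real.exp x1 - ff x1) :
    x1 + y1 < x2 + y2 := by
  by_contra hcon
  push_neg at hcon
  set d : ℝ := x1 - x2 with hd
  have hd0 : 0 < d := by simp [hd]; linarith
  set G : ℝ → ℝ := fun t => ff (y1 + t) * Real.exp (x1 - t) - ff (x1 - t) with hG
  have hder : ∀ t ∈ Icc (0:ℝ) d, HasDerivAt G
      ((1 - Real.exp (-(y1+t)) - (y1+t) * Real.exp (-(y1+t))) / (1 - Real.exp (-(y1+t))) ^ 2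
          * Real.exp (x1 - t)
        + ff (y1 + t) * (-Real.exp (x1 - t))
        - ((1 - Real.exp (-(x1-t)) - (x1-t) * Real.exp (-(x1-t))) / (1 - Real.exp (-(x1-t))) ^ 2
            * (-1))) t := by
    intro t ht
    have hyt : 0 < y1 + t := by have := ht.1; linarith
    have hxt : 0 < x1 - t := by have := ht.2; simp [hd] at *; linarith
    have h1 : HasDerivAt (fun t : ℝ => ff (y1 + t))
        ((1 - Real.exp (-(y1+t)) - (y1+t) * Real.exp (-(y1+t))) / (1 - Real.exp (-(y1+t))) ^ 2) t := by
      have := (hasDerivAt_ff hyt).comp t ((hasDerivAt_id t).const_add y1)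
      simpa [Function.comp_def] using this
    have haff : HasDerivAt (fun t : ℝ => x1 - t) (-1) t := by
      simpa using (hasDerivAt_id t).const_sub x1
    have h2 : HasDerivAt (fun t : ℝ => Real.exp (x1 - t)) (-Real.exp (x1 - t)) t := by
      have := (Real.hasDerivAt_exp (x1 - t)).comp t haff
      simpa [Function.comp_def] using this
    have h3 : HasDerivAt (fun t : ℝ => ff (x1 - t))
        ((1 - Real.exp (-(x1-t)) - (x1-t) * Real.exp (-(x1-t))) / (1 - Real.exp (-(x1-t))) ^ 2
          * (-1)) t := (hasDerivAt_ff hxt).comp t haff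
    exact (h1.mul h2).sub h3
  have hanti : StrictAntiOn G (Icc 0 d) := by
    apply strictAntiOn_of_deriv_neg (convex_Icc 0 d)
    · exact fun t ht => ((hder t ht).continuousAt).continuousWithinAt
    · intro t ht
      rw [interior_Icc] at ht
      have ht' : t ∈ Icc (0:ℝ) d := ⟨ht.1.le, ht.2.le⟩
      rw [(hder t ht').deriv]
      have hyt : 0 < y1 + t := by have := ht.1; linarith
      have hxt : 0 < x1 - t := by have := ht.2; simp [hd] at *; linarith
      have hmain := deriv_ineq hxt hyt
      have hexp : Real.exp (x1 - t) > 0 := Real.exp_pos _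
      nlinarith [hmain]
  have hGd : G d < G 0 := hanti ⟨le_refl 0, hd0.le⟩ ⟨hd0.le, le_refl d⟩ hd0
  have hG0 : G 0 = ff y1 * Real.exp x1 - ff x1 := by simp [hG]
  have hGdv : G d = ff (y1 + d) * Real.exp x2 - ff x2 := by
    simp only [hG, hd]
    norm_num
  have hy2le : y2 ≤ y1 + d := by simp [hd]; linarith
  have hffle : ff y2 ≤ ff (y1 + d) :=
    ff_strictMonoOn.monotoneOn (mem_Ioi.mpr hy2) (mem_Ioi.mpr (by linarith)) hy2le
  have hexp2 : 0 < Real.exp x2 := Real.exp_pos x2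
  nlinarith [hkk, hGd, hG0.symm ▸ hGd]

theorem stmt5 (k u v p1 p2 x1 y1 x2 y2 : ℝ) (hk : 0 < k) (hv : 0 < v) (hu : 1 < u)
    (huk : k = u - Real.log u / (1 - 1 / u))
    (hp1 : 0 ≤ p1) (hp12 : p1 < p2)
    (hr1 : 1 < v - p1 - k) (hr1' : v - p1 - k < u - k)
    (hr2 : 1 < v - p2 - k) (hr2' : v - p2 - k < u - k)
    (hx1 : 0 < x1) (hy1 : 0 < y1)
    (he1 : v - p1 - k = x1 / (1 - Real.exp (-x1)))
    (he1' : v - p1 = y1 * Real.exp x1 / (1 - Real.exp (-y1)))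
    (hx2 : 0 < x2) (hy2 : 0 < y2)
    (he2 : v - p2 - k = x2 / (1 - Real.exp (-x2)))
    (he2' : v - p2 = y2 * Real.exp x2 / (1 - Real.exp (-y2))) :
    p1 * (1 - Real.exp (-(x1 + y1))) < p2 * (1 - Real.exp (-(x2 + y2))) := by
  have hffx1 : ff x1 = v - p1 - k := he1.symm
  have hffx2 : ff x2 = v - p2 - k := he2.symm
  have hffy1 : ff y1 * Real.exp x1 = v - p1 := by
    rw [ff, he1']; ring
  have hffy2 : ff y2 * Real.exp x2 = v - p2 := by
    rw [ff, he2']; ring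
  have hkk : ff y2 * Real.exp x2 - ff x2 = ff y1 * Real.exp x1 - ff x1 := by
    rw [hffx1, hffx2, hffy1, hffy2]; ring
  have h21 : x2 < x1 := by
    have : ff x2 < ff x1 := by rw [hffx1, hffx2]; linarith
    exact (ff_strictMonoOn.lt_iff_lt (mem_Ioi.mpr hx2) (mem_Ioi.mpr hx1)).mp this
  have hsum : x1 + y1 < x2 + y2 := key hx2 h21 hy1 hy2 hkk
  have hA : 0 < 1 - Real.exp (-(x1 + y1)) := one_sub_exp_neg_pos (by linarith)
  have hAB : Real.exp (-(x2 + y2)) < Real.exp (-(x1 + y1)) :=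
    Real.exp_lt_exp.mpr (by linarith)
  have hp2 : 0 < p2 := lt_of_le_of_lt hp1 hp12
  nlinarith
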